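/- Let L, ρ > 0, let κ : ℝ → ℝ be continuous and L-periodic, and let u : ℝ × [0,ρ] → ℝ be C² (up to the boundary x = 0) and L-periodic in s, with u(s,0) = 0 and ∂_x u(s,0) = 0 for all s. Define ℓ(ε) = ∫₀^L sqrt((∂_s u(s,ε))² + (1 − κ(s) u(s,ε))²) ds for ε ∈ (0,ρ]. Then there exist a real number A, a constant C > 0, and ε₀ ∈ (0,ρ) such that for all ε ∈ (0,ε₀], | ∫_ε^ρ ∫₀^L J_u(s,x) x^{−2} ds dx − ℓ(ε)/ε − A | ≤ C ε. In other words, the hyperbolic area of the truncated graph band equals ℓ(ε)/ε + A + O(ε), so the constant term A in this Hadamard regularization (the renormalized area of the band) is well-defined. -/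

import Mathlib

noncomputable section

/-- Partial derivative in the first variable `s`. -/
def pS (u : ℝ × ℝ → ℝ) (p : ℝ × ℝ) : ℝ := deriv (fun t => u (t, p.2)) p.1

/-- Partial derivative in the second variable `x`. -/
def pX (u : ℝ × ℝ → ℝ) (p : ℝ × ℝ) : ℝ := deriv (fun t => u (p.1, t)) p.2

/-- The Jacobian `J_f(s,x) = sqrt((∂_s f)² + (1 − κ(s) f)² (1 + (∂_x f)²))` of the
horizontal graph of `f` over the vertical cylinder on a unit-speed plane curve of
curvature `κ`. -/
def Jgraph (κ : ℝ → ℝ) (f : ℝ × ℝ → ℝ) (p : ℝ × ℝ) : ℝ :=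
  Real.sqrt ((pS f p) ^ 2 + (1 - κ p.1 * f p) ^ 2 * (1 + (pX f p) ^ 2))

open MeasureTheory Set intervalIntegral

lemma abs_sqrt_sub_one_le {E : ℝ} (hE : 0 ≤ E) : |Real.sqrt E - 1| ≤ |E - 1| := by
  have hs : Real.sqrt E ^ 2 = E := Real.sq_sqrt hE
  have h2 := Real.sqrt_nonneg E
  have h3 : |E - 1| = |Real.sqrt E - 1| * |Real.sqrt E + 1| := by
    rw [← abs_mul, show (Real.sqrt E - 1) * (Real.sqrt E + 1) = Real.sqrt E ^ 2 - 1 by ring, hs]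
  rw [h3]
  exact le_mul_of_one_le_right (abs_nonneg _)
    (by rw [abs_of_nonneg (by linarith)]; linarith)

set_option maxHeartbeats 1000000 in
/-- The renormalized area of a graph band is well defined: for an `L`-periodic `C²`
graph function `u` with `u(s,0) = 0` and `∂_x u(s,0) = 0`, the hyperbolic area
`∫_ε^ρ ∫₀^L J_u x^{−2} ds dx` of the truncated band equals `ℓ(ε)/ε + A + O(ε)`, where
`ℓ(ε) = ∫₀^L sqrt((∂_s u(s,ε))² + (1 − κ(s)u(s,ε))²) ds` is the length of the curve at
height `ε` and `A` is a constant. -/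
theorem renormalized_area_band_well_defined
    (L ρ : ℝ) (hL : 0 < L) (hρ : 0 < ρ)
    (κ : ℝ → ℝ) (hκc : Continuous κ) (hκp : Function.Periodic κ L)
    (u : ℝ × ℝ → ℝ) (hu : ContDiff ℝ 2 u)
    (huper : ∀ s x : ℝ, u (s + L, x) = u (s, x))
    (hu0 : ∀ s : ℝ, u (s, 0) = 0)
    (hux0 : ∀ s : ℝ, pX u (s, 0) = 0) :
    ∃ (A C ε₀ : ℝ), 0 < C ∧ ε₀ ∈ Set.Ioo 0 ρ ∧
      ∀ ε ∈ Set.Ioc (0 : ℝ) ε₀,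
        |(∫ x in ε..ρ, (∫ s in (0 : ℝ)..L, Jgraph κ u (s, x)) / x ^ 2)
            - (∫ s in (0 : ℝ)..L,
                Real.sqrt ((pS u (s, ε)) ^ 2 + (1 - κ s * u (s, ε)) ^ 2)) / ε
            - A| ≤ C * ε := by
  have hud : Differentiable ℝ u := hu.differentiable (by norm_num)
  -- derivative formulas
  have hpS : ∀ p : ℝ × ℝ, pS u p = fderiv ℝ u p (1, 0) := by
    intro p
    have h1 : HasDerivAt (fun t : ℝ => (t, p.2)) ((1 : ℝ), (0 : ℝ)) p.1 :=
      HasDerivAt.prodMk (hasDerivAt_id p.1) (hasDerivAt_const _ _)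
    have h2 : HasFDerivAt u (fderiv ℝ u p) (p.1, p.2) := by
      rw [Prod.mk.eta]; exact (hud p).hasFDerivAt
    exact (h2.comp_hasDerivAt p.1 h1).deriv
  have hpX : ∀ p : ℝ × ℝ, pX u p = fderiv ℝ u p (0, 1) := by
    intro p
    have h1 : HasDerivAt (fun t : ℝ => (p.1, t)) ((0 : ℝ), (1 : ℝ)) p.2 :=
      HasDerivAt.prodMk (hasDerivAt_const _ _) (hasDerivAt_id p.2)
    have h2 : HasFDerivAt u (fderiv ℝ u p) (p.1, p.2) := by
      rw [Prod.mk.eta]; exact (hud p).hasFDerivAt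
    exact (h2.comp_hasDerivAt p.2 h1).deriv
  have hgc : Continuous (fderiv ℝ u) := hu.continuous_fderiv (by norm_num)
  have hg1 : ContDiff ℝ 1 (fderiv ℝ u) := hu.fderiv_right (by norm_num)
  have hggc : Continuous (fderiv ℝ (fderiv ℝ u)) := hg1.continuous_fderiv (by norm_num)
  -- Lipschitz bound for fderiv u on the compact strip
  obtain ⟨M0, hM0⟩ :=
    (isCompact_Icc (a := ((0 : ℝ), (0 : ℝ))) (b := (L, ρ))).exists_bound_of_continuousOn
      (E := ℝ × ℝ →L[ℝ] ℝ × ℝ →L[ℝ] ℝ) (f := fderiv ℝ (fderiv ℝ u)) hggc.continuousOn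
  set Q : Set (ℝ × ℝ) := Icc ((0 : ℝ), (0 : ℝ)) (L, ρ) with hQdef
  set M : ℝ := max M0 0 with hMdef
  have hM : 0 ≤ M := le_max_right _ _
  have hlip : ∀ p ∈ Q, ∀ q ∈ Q, ‖fderiv ℝ u p - fderiv ℝ u q‖ ≤ M * ‖p - q‖ := by
    intro p hp q hq
    exact Convex.norm_image_sub_le_of_norm_fderiv_le
      (fun z _ => hg1.differentiable (by norm_num) z)
      (fun z hz => le_trans (hM0 z hz) (le_max_left _ _)) (convex_Icc _ _) hq hp
  have hmem : ∀ {s x : ℝ}, s ∈ Icc 0 L → x ∈ Icc 0 ρ → (s, x) ∈ Q := by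
    intro s x hs hx
    exact ⟨⟨hs.1, hx.1⟩, ⟨hs.2, hx.2⟩⟩
  have hnormx : ∀ s x : ℝ, ((s, x) : ℝ × ℝ) - (s, 0) = ((0 : ℝ), x) := by
    intro s x; simp [Prod.ext_iff]
  have hnorm0x : ∀ x : ℝ, ‖(((0 : ℝ), x) : ℝ × ℝ)‖ = |x| := by
    intro x
    simp [Prod.norm_def, Real.norm_eq_abs, max_eq_right (abs_nonneg x)]
  -- pS vanishes at x = 0
  have hpS0 : ∀ s : ℝ, pS u (s, 0) = 0 := by
    intro s
    have h : (fun t : ℝ => u (t, (0 : ℝ))) = fun _ => (0 : ℝ) := funext fun t => hu0 t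
    show deriv (fun t => u (t, (0 : ℝ))) s = 0
    rw [h, deriv_const]
  -- bounds
  have key_clm : ∀ (s x : ℝ) (v : ℝ × ℝ), s ∈ Icc 0 L → x ∈ Icc 0 ρ → ‖v‖ = 1 →
      |(fderiv ℝ u (s, x)) v - (fderiv ℝ u (s, 0)) v| ≤ M * x := by
    intro s x v hs hx hv
    have h1 : (fderiv ℝ u (s, x)) v - (fderiv ℝ u (s, 0)) v
        = (fderiv ℝ u (s, x) - fderiv ℝ u (s, 0)) v := by
      rw [ContinuousLinearMap.sub_apply]
    rw [h1, ← Real.norm_eq_abs]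
    calc ‖(fderiv ℝ u (s, x) - fderiv ℝ u (s, 0)) v‖
        ≤ ‖fderiv ℝ u (s, x) - fderiv ℝ u (s, 0)‖ * ‖v‖ :=
          ContinuousLinearMap.le_opNorm _ _
      _ ≤ (M * ‖((s, x) : ℝ × ℝ) - (s, 0)‖) * 1 := by
          rw [hv]
          have := hlip (s, x) (hmem hs hx) (s, 0) (hmem hs ⟨le_refl 0, hρ.le⟩)
          simpa using this
      _ = M * x := by
          rw [hnormx, hnorm0x, abs_of_nonneg hx.1, mul_one]
  have hSb : ∀ s ∈ Icc (0:ℝ) L, ∀ x ∈ Icc (0:ℝ) ρ, |pS u (s, x)| ≤ M * x := by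
    intro s hs x hx
    have h := key_clm s x (1, 0) hs hx (by simp [Prod.norm_def])
    have h0 : (fderiv ℝ u (s, 0)) (1, 0) = 0 := by rw [← hpS (s, 0)]; exact hpS0 s
    rw [h0, sub_zero, ← hpS (s, x)] at h
    exact h
  have hXb : ∀ s ∈ Icc (0:ℝ) L, ∀ x ∈ Icc (0:ℝ) ρ, |pX u (s, x)| ≤ M * x := by
    intro s hs x hx
    have h := key_clm s x (0, 1) hs hx (by simp [Prod.norm_def])
    have h0 : (fderiv ℝ u (s, 0)) (0, 1) = 0 := by rw [← hpX (s, 0)]; exact hux0 s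
    rw [h0, sub_zero, ← hpX (s, x)] at h
    exact h
  have hUb : ∀ s ∈ Icc (0:ℝ) L, ∀ x ∈ Icc (0:ℝ) ρ, |u (s, x)| ≤ M * x ^ 2 := by
    intro s hs x hx
    have hdiff : ∀ t ∈ Icc (0 : ℝ) x, DifferentiableAt ℝ (fun t' => u (s, t')) t := by
      intro t _
      exact (hud (s, t)).comp t (DifferentiableAt.prodMk (differentiableAt_const s) differentiableAt_id)
    have hderiv : ∀ t ∈ Icc (0 : ℝ) x, ‖deriv (fun t' => u (s, t')) t‖ ≤ M * x := by
      intro t ht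
      have heq : deriv (fun t' => u (s, t')) t = pX u (s, t) := rfl
      rw [Real.norm_eq_abs, heq]
      have htρ : t ∈ Icc (0 : ℝ) ρ := ⟨ht.1, le_trans ht.2 hx.2⟩
      exact le_trans (hXb s hs t htρ) (mul_le_mul_of_nonneg_left ht.2 hM)
    have h := Convex.norm_image_sub_le_of_norm_deriv_le hdiff hderiv (convex_Icc _ _)
      (left_mem_Icc.mpr hx.1) (right_mem_Icc.mpr hx.1)
    rw [hu0 s, sub_zero, sub_zero, Real.norm_eq_abs, Real.norm_eq_abs,
      abs_of_nonneg hx.1] at h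
    calc |u (s, x)| ≤ M * x * x := h
      _ = M * x ^ 2 := by ring
  -- bound for κ
  obtain ⟨Mκ0, hMκ0⟩ := (isCompact_Icc (a := (0:ℝ)) (b := L)).exists_bound_of_continuousOn
    hκc.continuousOn
  set Mκ : ℝ := max Mκ0 0 with hMκdef
  have hMκ : 0 ≤ Mκ := le_max_right _ _
  have hκb : ∀ s ∈ Icc (0:ℝ) L, |κ s| ≤ Mκ := by
    intro s hs
    exact le_trans (hMκ0 s hs) (le_max_left _ _)
  -- constants
  set D : ℝ := Mκ * M * ρ ^ 2 with hDdef
  have hD : 0 ≤ D := by positivity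
  set K : ℝ := M ^ 2 * (1 + (1 + D) ^ 2) + Mκ * M * (D + 2) with hKdef
  have hK : 0 ≤ K := by positivity
  -- pointwise estimates
  have key : ∀ s ∈ Icc (0:ℝ) L, ∀ x ∈ Icc (0:ℝ) ρ,
      |(pS u (s, x)) ^ 2 + (1 - κ s * u (s, x)) ^ 2 * (1 + (pX u (s, x)) ^ 2) - 1| ≤ K * x ^ 2
      ∧ |(pS u (s, x)) ^ 2 + (1 - κ s * u (s, x)) ^ 2 - 1| ≤ K * x ^ 2 := by
    intro s hs x hx
    set q := pS u (s, x)
    set p := pX u (s, x)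
    set c := κ s * u (s, x) with hcdef
    have hq : |q| ≤ M * x := hSb s hs x hx
    have hp : |p| ≤ M * x := hXb s hs x hx
    have hc : |c| ≤ Mκ * M * x ^ 2 := by
      rw [hcdef, abs_mul]
      calc |κ s| * |u (s, x)| ≤ Mκ * (M * x ^ 2) :=
            mul_le_mul (hκb s hs) (hUb s hs x hx) (abs_nonneg _) hMκ
        _ = Mκ * M * x ^ 2 := by ring
    have hcD : |c| ≤ D := by
      refine le_trans hc ?_
      rw [hDdef]
      have hx2 : x ^ 2 ≤ ρ ^ 2 := by nlinarith [hx.1, hx.2]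
      exact mul_le_mul_of_nonneg_left hx2 (by positivity)
    have sq_bound : ∀ a b : ℝ, |a| ≤ b → a ^ 2 ≤ b ^ 2 := by
      intro a b hab
      calc a ^ 2 = |a| ^ 2 := (sq_abs a).symm
        _ ≤ b ^ 2 := pow_le_pow_left₀ (abs_nonneg a) hab 2
    have e1 : q ^ 2 ≤ M ^ 2 * x ^ 2 := by
      have := sq_bound q (M * x) hq
      calc q ^ 2 ≤ (M * x) ^ 2 := this
        _ = M ^ 2 * x ^ 2 := by ring
    have e2 : p ^ 2 ≤ M ^ 2 * x ^ 2 := by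
      have := sq_bound p (M * x) hp
      calc p ^ 2 ≤ (M * x) ^ 2 := this
        _ = M ^ 2 * x ^ 2 := by ring
    have e3 : (1 - c) ^ 2 ≤ (1 + D) ^ 2 := by
      refine sq_bound _ _ ?_
      calc |1 - c| ≤ |(1:ℝ)| + |c| := abs_sub _ _
        _ = 1 + |c| := by norm_num
        _ ≤ 1 + D := by linarith
    have e6 : |c ^ 2 - 2 * c| ≤ Mκ * M * x ^ 2 * (D + 2) := by
      have h1 : |c ^ 2 - 2 * c| ≤ |c| * (|c| + 2) := by
        calc |c ^ 2 - 2 * c| = |c * (c - 2)| := by ring_nf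
          _ = |c| * |c - 2| := abs_mul _ _
          _ ≤ |c| * (|c| + 2) := by
              refine mul_le_mul_of_nonneg_left ?_ (abs_nonneg _)
              calc |c - 2| ≤ |c| + |(2:ℝ)| := abs_sub _ _
                _ = |c| + 2 := by norm_num
      refine le_trans h1 ?_
      exact mul_le_mul hc (by linarith) (by positivity) (by positivity)
    have hb2 : (1 - c) ^ 2 * p ^ 2 ≤ (1 + D) ^ 2 * (M ^ 2 * x ^ 2) :=
      mul_le_mul e3 e2 (sq_nonneg p) (by positivity)
    constructor
    · have h : q ^ 2 + (1 - c) ^ 2 * (1 + p ^ 2) - 1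
          = q ^ 2 + (1 - c) ^ 2 * p ^ 2 + (c ^ 2 - 2 * c) := by ring
      rw [h]
      calc |q ^ 2 + (1 - c) ^ 2 * p ^ 2 + (c ^ 2 - 2 * c)|
          ≤ |q ^ 2 + (1 - c) ^ 2 * p ^ 2| + |c ^ 2 - 2 * c| := abs_add_le _ _
        _ = (q ^ 2 + (1 - c) ^ 2 * p ^ 2) + |c ^ 2 - 2 * c| := by
            rw [abs_of_nonneg (by positivity)]
        _ ≤ (M ^ 2 * x ^ 2 + (1 + D) ^ 2 * (M ^ 2 * x ^ 2)) + Mκ * M * x ^ 2 * (D + 2) := by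
            have := add_le_add (add_le_add e1 hb2) e6
            linarith
        _ = K * x ^ 2 := by rw [hKdef]; ring
    · have h : q ^ 2 + (1 - c) ^ 2 - 1 = q ^ 2 + (c ^ 2 - 2 * c) := by ring
      rw [h]
      calc |q ^ 2 + (c ^ 2 - 2 * c)| ≤ |q ^ 2| + |c ^ 2 - 2 * c| := abs_add_le _ _
        _ = q ^ 2 + |c ^ 2 - 2 * c| := by rw [abs_of_nonneg (sq_nonneg q)]
        _ ≤ M ^ 2 * x ^ 2 + Mκ * M * x ^ 2 * (D + 2) := add_le_add e1 e6
        _ ≤ K * x ^ 2 := by rw [hKdef]; nlinarith [sq_nonneg (1 + D), sq_nonneg x, sq_nonneg M]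
  -- pointwise bounds on sqrt level
  have hJpt : ∀ s ∈ Icc (0:ℝ) L, ∀ x ∈ Icc (0:ℝ) ρ,
      |Jgraph κ u (s, x) - 1| ≤ K * x ^ 2 := by
    intro s hs x hx
    have hE0 : (0:ℝ) ≤ (pS u (s, x)) ^ 2 + (1 - κ s * u (s, x)) ^ 2 * (1 + (pX u (s, x)) ^ 2) := by
      positivity
    have := abs_sqrt_sub_one_le hE0
    exact le_trans this ((key s hs x hx).1)
  have hGpt : ∀ s ∈ Icc (0:ℝ) L, ∀ x ∈ Icc (0:ℝ) ρ,
      |Real.sqrt ((pS u (s, x)) ^ 2 + (1 - κ s * u (s, x)) ^ 2) - 1| ≤ K * x ^ 2 := by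
    intro s hs x hx
    have hE0 : (0:ℝ) ≤ (pS u (s, x)) ^ 2 + (1 - κ s * u (s, x)) ^ 2 := by positivity
    exact le_trans (abs_sqrt_sub_one_le hE0) ((key s hs x hx).2)
  -- continuity
  have hcS : Continuous fun p : ℝ × ℝ => pS u p := by
    have h : (fun p : ℝ × ℝ => pS u p) = fun p => fderiv ℝ u p (1, 0) := funext hpS
    rw [h]; exact hgc.clm_apply continuous_const
  have hcX : Continuous fun p : ℝ × ℝ => pX u p := by
    have h : (fun p : ℝ × ℝ => pX u p) = fun p => fderiv ℝ u p (0, 1) := funext hpX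
    rw [h]; exact hgc.clm_apply continuous_const
  have hJcont : Continuous (Jgraph κ u) := by
    unfold Jgraph
    exact Real.continuous_sqrt.comp
      ((hcS.pow 2).add
        (((continuous_const.sub ((hκc.comp continuous_fst).mul hu.continuous)).pow 2).mul
          (continuous_const.add (hcX.pow 2))))
  have hGcont : Continuous fun p : ℝ × ℝ =>
      Real.sqrt ((pS u p) ^ 2 + (1 - κ p.1 * u p) ^ 2) :=
    Real.continuous_sqrt.comp
      ((hcS.pow 2).add
        ((continuous_const.sub ((hκc.comp continuous_fst).mul hu.continuous)).pow 2))
  -- the areas F and lengths G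
  set F : ℝ → ℝ := fun x => ∫ s in (0:ℝ)..L, Jgraph κ u (s, x) with hFdef
  set G : ℝ → ℝ := fun t => ∫ s in (0:ℝ)..L,
      Real.sqrt ((pS u (s, t)) ^ 2 + (1 - κ s * u (s, t)) ^ 2) with hGdef
  have hFc : Continuous F :=
    continuous_parametric_intervalIntegral_of_continuous'
      (f := fun x s => Jgraph κ u (s, x)) (hJcont.comp continuous_swap) 0 L
  have hFL : ∀ x ∈ Icc (0:ℝ) ρ, |F x - L| ≤ K * L * x ^ 2 := by
    intro x hx
    have hint : IntervalIntegrable (fun s => Jgraph κ u (s, x)) volume 0 L :=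
      (hJcont.comp (continuous_id.prodMk continuous_const)).intervalIntegrable _ _
    have h1 : F x - L = ∫ s in (0:ℝ)..L, (Jgraph κ u (s, x) - 1) := by
      rw [intervalIntegral.integral_sub hint intervalIntegrable_const,
        intervalIntegral.integral_const]
      simp
      rfl
    rw [h1, ← Real.norm_eq_abs]
    have h2 := intervalIntegral.norm_integral_le_of_norm_le_const
      (C := K * x ^ 2) (f := fun s => Jgraph κ u (s, x) - 1) (a := (0:ℝ)) (b := L) ?_
    · calc ‖∫ s in (0:ℝ)..L, (Jgraph κ u (s, x) - 1)‖ ≤ K * x ^ 2 * |L - 0| := h2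
        _ = K * L * x ^ 2 := by rw [sub_zero, abs_of_pos hL]; ring
    · intro s hsm
      rw [uIoc_of_le hL.le] at hsm
      rw [Real.norm_eq_abs]
      exact hJpt s (Ioc_subset_Icc_self hsm) x hx
  have hGL : ∀ x ∈ Icc (0:ℝ) ρ, |G x - L| ≤ K * L * x ^ 2 := by
    intro x hx
    have hint : IntervalIntegrable
        (fun s => Real.sqrt ((pS u (s, x)) ^ 2 + (1 - κ s * u (s, x)) ^ 2)) volume 0 L :=
      (hGcont.comp (continuous_id.prodMk continuous_const)).intervalIntegrable _ _
    have h1 : G x - L = ∫ s in (0:ℝ)..L,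
        (Real.sqrt ((pS u (s, x)) ^ 2 + (1 - κ s * u (s, x)) ^ 2) - 1) := by
      rw [hGdef]
      simp only
      rw [intervalIntegral.integral_sub hint intervalIntegrable_const,
        intervalIntegral.integral_const]
      simp
    rw [h1, ← Real.norm_eq_abs]
    have h2 := intervalIntegral.norm_integral_le_of_norm_le_const
      (C := K * x ^ 2)
      (f := fun s => Real.sqrt ((pS u (s, x)) ^ 2 + (1 - κ s * u (s, x)) ^ 2) - 1)
      (a := (0:ℝ)) (b := L) ?_
    · calc ‖∫ s in (0:ℝ)..L,
          (Real.sqrt ((pS u (s, x)) ^ 2 + (1 - κ s * u (s, x)) ^ 2) - 1)‖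
          ≤ K * x ^ 2 * |L - 0| := h2
        _ = K * L * x ^ 2 := by rw [sub_zero, abs_of_pos hL]; ring
    · intro s hsm
      rw [uIoc_of_le hL.le] at hsm
      rw [Real.norm_eq_abs]
      exact hGpt s (Ioc_subset_Icc_self hsm) x hx
  -- the renormalized integrand
  set ψ : ℝ → ℝ := fun x => (F x - L) / x ^ 2 with hψdef
  have hψbound : ∀ x ∈ Ioc (0:ℝ) ρ, |ψ x| ≤ K * L := by
    intro x hx
    have hx2 : (0:ℝ) < x ^ 2 := pow_pos hx.1 2
    rw [hψdef]
    simp only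
    rw [abs_div, abs_of_pos hx2, div_le_iff₀ hx2]
    calc |F x - L| ≤ K * L * x ^ 2 := hFL x ⟨hx.1.le, hx.2⟩
      _ = K * L * x ^ 2 := rfl
  have hψIoc : IntegrableOn ψ (Ioc (0:ℝ) ρ) volume := by
    refine Integrable.mono' (integrable_const (K * L)) ?_ ?_
    · refine ContinuousOn.aestronglyMeasurable ?_ measurableSet_Ioc
      refine ContinuousOn.div (hFc.sub continuous_const).continuousOn
        (continuous_pow 2).continuousOn ?_
      intro x hx
      exact pow_ne_zero 2 (ne_of_gt hx.1)
    · refine (ae_restrict_iff' measurableSet_Ioc).mpr (ae_of_all _ ?_)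
      intro x hx
      rw [Real.norm_eq_abs]
      exact hψbound x hx
  have hψ0ρ : IntervalIntegrable ψ volume 0 ρ :=
    (intervalIntegrable_iff_integrableOn_Ioc_of_le hρ.le).mpr hψIoc
  -- choice of constants
  refine ⟨(∫ x in (0:ℝ)..ρ, ψ x) - L / ρ, 2 * K * L + 1, ρ / 2, by positivity,
    ⟨by linarith, by linarith⟩, ?_⟩
  intro ε hε
  obtain ⟨hε0, hε2⟩ := hε
  have hερ : ε ≤ ρ := by linarith
  have hεborder : ε < ρ := by linarith
  have hεne : ε ≠ 0 := ne_of_gt hε0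
  have hψ0ε : IntervalIntegrable ψ volume 0 ε := by
    refine hψ0ρ.mono_set ?_
    rw [uIcc_of_le hε0.le, uIcc_of_le hρ.le]
    exact Icc_subset_Icc le_rfl hερ
  have hψερ : IntervalIntegrable ψ volume ε ρ := by
    refine hψ0ρ.mono_set ?_
    rw [uIcc_of_le hερ, uIcc_of_le hρ.le]
    exact Icc_subset_Icc hε0.le le_rfl
  have hLint : IntervalIntegrable (fun x : ℝ => L * (x ^ 2)⁻¹) volume ε ρ := by
    refine ContinuousOn.intervalIntegrable ?_
    refine ContinuousOn.mul continuousOn_const (ContinuousOn.inv₀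
      (continuous_pow 2).continuousOn ?_)
    intro x hx
    rw [uIcc_of_le hερ] at hx
    exact pow_ne_zero 2 (ne_of_gt (lt_of_lt_of_le hε0 hx.1))
  -- rewrite the main integral
  have step1 : (∫ x in ε..ρ, F x / x ^ 2)
      = (∫ x in ε..ρ, ψ x) + ∫ x in ε..ρ, L * (x ^ 2)⁻¹ := by
    rw [← intervalIntegral.integral_add hψερ hLint]
    refine intervalIntegral.integral_congr ?_
    intro x hx
    rw [uIcc_of_le hερ] at hx
    have hx0 : x ≠ 0 := ne_of_gt (lt_of_lt_of_le hε0 hx.1)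
    field_simp [hψdef]
    simp only [hψdef]
    field_simp
    ring
  have step2 : (∫ x in ε..ρ, L * (x ^ 2)⁻¹) = L * (ε⁻¹ - ρ⁻¹) := by
    rw [intervalIntegral.integral_const_mul]
    have h3 : (∫ x in ε..ρ, (x ^ 2)⁻¹) = -ρ⁻¹ - -ε⁻¹ := by
      refine intervalIntegral.integral_eq_sub_of_hasDerivAt (f := fun y : ℝ => -y⁻¹) ?_ ?_
      · intro x hx
        rw [uIcc_of_le hερ] at hx
        have hx0 : x ≠ 0 := ne_of_gt (lt_of_lt_of_le hε0 hx.1)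
        simpa using (hasDerivAt_inv hx0).fun_neg
      · refine ContinuousOn.intervalIntegrable (ContinuousOn.inv₀
          (continuous_pow 2).continuousOn ?_)
        intro x hx
        rw [uIcc_of_le hερ] at hx
        exact pow_ne_zero 2 (ne_of_gt (lt_of_lt_of_le hε0 hx.1))
    rw [h3]; ring
  have step3 : (∫ x in ε..ρ, ψ x) = (∫ x in (0:ℝ)..ρ, ψ x) - ∫ x in (0:ℝ)..ε, ψ x := by
    rw [← intervalIntegral.integral_add_adjacent_intervals hψ0ε hψερ]
    ring
  -- bound the two error terms
  have hI1 : |∫ x in (0:ℝ)..ε, ψ x| ≤ K * L * ε := by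
    rw [← Real.norm_eq_abs]
    have h := intervalIntegral.norm_integral_le_of_norm_le_const (C := K * L)
      (f := ψ) (a := (0:ℝ)) (b := ε) ?_
    · calc ‖∫ x in (0:ℝ)..ε, ψ x‖ ≤ K * L * |ε - 0| := h
        _ = K * L * ε := by rw [sub_zero, abs_of_pos hε0]
    · intro x hx
      rw [uIoc_of_le hε0.le] at hx
      rw [Real.norm_eq_abs]
      exact hψbound x ⟨hx.1, le_trans hx.2 hερ⟩
  have hG2 : |G ε - L| ≤ K * L * ε ^ 2 := hGL ε ⟨hε0.le, hερ⟩
  -- assemble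
  have hrw : (∫ x in ε..ρ, F x / x ^ 2) - G ε / ε - ((∫ x in (0:ℝ)..ρ, ψ x) - L / ρ)
      = (L - G ε) / ε - ∫ x in (0:ℝ)..ε, ψ x := by
    rw [step1, step2, step3]
    field_simp
    ring
  calc |(∫ x in ε..ρ, F x / x ^ 2) - G ε / ε - ((∫ x in (0:ℝ)..ρ, ψ x) - L / ρ)|
      = |(L - G ε) / ε - ∫ x in (0:ℝ)..ε, ψ x| := by rw [hrw]
    _ ≤ |(L - G ε) / ε| + |∫ x in (0:ℝ)..ε, ψ x| := abs_sub _ _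
    _ ≤ K * L * ε + K * L * ε := by
        refine add_le_add ?_ hI1
        rw [abs_div, abs_of_pos hε0, div_le_iff₀ hε0, abs_sub_comm]
        calc |G ε - L| ≤ K * L * ε ^ 2 := hG2
          _ = K * L * ε * ε := by ring
    _ ≤ (2 * K * L + 1) * ε := by nlinarith
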